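/- Let φ_μ(λ) = b(ḃ⁻¹(μ) + λ) - b(ḃ⁻¹(μ)) be the cumulant generating function of the exponential-family distribution with mean μ. Then μ ↦ φ_μ(λ) is nonincreasing in μ when λ < 0 and nondecreasing in μ when λ > 0. -/

import Mathlib

/-- Monotonicity of the exponential-family cumulant generating function in the mean:
with `θ = (b')⁻¹` mapping mean to natural parameters, `μ ↦ φ_μ(λ) = b(θ(μ) + λ) - b(θ(μ))`
is nonincreasing when `λ < 0` and nondecreasing when `λ > 0`. -/
theorem stmt_10 (b : ℝ → ℝ) (hconv : StrictConvexOn ℝ Set.univ b)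
    (hdiff : Differentiable ℝ b) (θ : ℝ → ℝ) (hθ : ∀ μ, deriv b (θ μ) = μ)
    (lam : ℝ) :
    (lam < 0 → Antitone (fun μ => b (θ μ + lam) - b (θ μ))) ∧
    (0 < lam → Monotone (fun μ => b (θ μ + lam) - b (θ μ))) := by
  have hsm : StrictMono (deriv b) := by
    have := hconv.strictMonoOn_deriv (fun x _ => hdiff x)
    intro x y hxy
    exact this (Set.mem_univ x) (Set.mem_univ y) hxy
  have hθmono : Monotone θ := by
    intro x y hxy
    by_contra h
    push_neg at h
    have := hsm h
    rw [hθ, hθ] at this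
    exact absurd hxy (not_le.2 this)
  have hderiv : ∀ t : ℝ, deriv (fun t => b (t + lam) - b t) t
      = deriv b (t + lam) - deriv b t := by
    intro t
    have h1 : HasDerivAt (fun t => b (t + lam)) (deriv b (t + lam)) t := by
      simpa [Function.comp_def] using ((hdiff (t + lam)).hasDerivAt.comp t ((hasDerivAt_id t).add_const lam))
    exact (h1.sub (hdiff t).hasDerivAt).deriv
  constructor
  · intro hlam
    have hanti : StrictAnti (fun t => b (t + lam) - b t) := by
      apply strictAnti_of_deriv_neg
      intro t
      rw [hderiv t]
      have : deriv b (t + lam) < deriv b t := hsm (by linarith)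
      linarith
    intro x y hxy
    exact hanti.antitone (hθmono hxy)
  · intro hlam
    have hmono : StrictMono (fun t => b (t + lam) - b t) := by
      apply strictMono_of_deriv_pos
      intro t
      rw [hderiv t]
      have : deriv b t < deriv b (t + lam) := hsm (by linarith)
      linarith
    intro x y hxy
    exact hmono.monotone (hθmono hxy)
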